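/- arXiv:1211.4588 — 3 statements merged into one kernel-verified Lean document; each statement's English description precedes it below -/
import Mathlib

section
/- In a real normed vector space of dimension ≥ 2, given three nonnegative reals p, q, r satisfying the three weak triangle inequalities p ≤ q + r, q ≤ p + r, r ≤ p + q, there exist points a, b, c with ‖a - b‖ = p, ‖b - c‖ = q, and ‖a - c‖ = r. -/
theorem stmt_10 (V : Type*) [NormedAddCommGroup V] [NormedSpace ℝ V]
    (hdim : 2 ≤ Module.rank ℝ V) (p q r : ℝ)
    (hp : 0 ≤ p) (hq : 0 ≤ q) (hr : 0 ≤ r)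
    (h1 : p ≤ q + r) (h2 : q ≤ p + r) (h3 : r ≤ p + q) :
    ∃ a b c : V, ‖a - b‖ = p ∧ ‖b - c‖ = q ∧ ‖a - c‖ = r := by
  have hnt : Nontrivial V := by
    rw [← rank_pos_iff_nontrivial (R := ℝ)]
    exact lt_of_lt_of_le (by norm_num) hdim
  obtain ⟨u, hu⟩ := exists_norm_eq V (zero_le_one)
  set cv : V := r • u with hcv
  have hcvn : ‖cv‖ = r := by
    rw [hcv, norm_smul, hu, Real.norm_eq_abs, abs_of_nonneg hr, mul_one]
  have hconn : IsConnected (Metric.sphere (0 : V) p) :=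
    isConnected_sphere (lt_of_lt_of_le (by norm_num) hdim) 0 hp
  have hx1 : (p • u) ∈ Metric.sphere (0 : V) p := by
    simp [norm_smul, hu, abs_of_nonneg hp]
  have hx2 : (-(p • u)) ∈ Metric.sphere (0 : V) p := by
    simp [norm_smul, hu, abs_of_nonneg hp]
  have hf : ContinuousOn (fun x : V => ‖x - cv‖) (Metric.sphere (0 : V) p) :=
    (continuous_norm.comp (continuous_id.sub continuous_const)).continuousOn
  have hval1 : ‖p • u - cv‖ = |p - r| := by
    rw [hcv, ← sub_smul, norm_smul, hu, mul_one, Real.norm_eq_abs]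
  have hval2 : ‖-(p • u) - cv‖ = p + r := by
    rw [hcv, ← neg_one_smul ℝ (p • u), smul_smul, ← sub_smul, norm_smul, hu, mul_one,
      Real.norm_eq_abs]
    rw [abs_of_nonpos (by nlinarith)]
    ring
  have hq1 : |p - r| ≤ q := by
    rw [abs_sub_le_iff]; constructor <;> linarith
  have key : q ∈ (fun x : V => ‖x - cv‖) '' Metric.sphere (0 : V) p := by
    apply hconn.isPreconnected.intermediate_value hx1 hx2 hf
    rw [hval1, hval2]
    exact ⟨hq1, by linarith⟩
  obtain ⟨x, hxs, hxq⟩ := key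
  refine ⟨0, x, cv, ?_, ?_, ?_⟩
  · simpa using mem_sphere_zero_iff_norm.mp hxs
  · exact hxq
  · simpa using hcvn
end

section
/- In a real normed vector space, define ab ≤' cd to mean: for all m, if ‖c - m‖ = ‖d - m‖ then there exists s with ‖a - b‖ = ‖c - s‖ and ‖c - m‖ = ‖s - m‖. In a strictly convex space of dimension ≥ 2, ab ≤' cd holds if and only if ‖a - b‖ ≤ ‖c - d‖. -/
theorem stmt_11 (V : Type*) [NormedAddCommGroup V] [NormedSpace ℝ V]
    [StrictConvexSpace ℝ V] (hdim : 2 ≤ Module.rank ℝ V) (a b c d : V) :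
    (∀ m : V, ‖c - m‖ = ‖d - m‖ →
        ∃ s : V, ‖a - b‖ = ‖c - s‖ ∧ ‖c - m‖ = ‖s - m‖) ↔
      ‖a - b‖ ≤ ‖c - d‖ := by
  constructor
  · intro h
    set p : V := (2⁻¹ : ℝ) • (c + d) with hp
    have e1 : c - p = (2⁻¹ : ℝ) • (c - d) := by rw [hp]; module
    have e2 : d - p = (2⁻¹ : ℝ) • (d - c) := by rw [hp]; module
    have hm : ‖c - p‖ = ‖d - p‖ := by
      rw [e1, e2, norm_smul, norm_smul, norm_sub_rev]
    obtain ⟨s, hs1, hs2⟩ := h _ hm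
    have hcm : ‖c - p‖ = ‖c - d‖ / 2 := by
      rw [e1, norm_smul]; simp; ring
    calc ‖a - b‖ = ‖c - s‖ := hs1
      _ ≤ ‖c - p‖ + ‖p - s‖ := by
          simpa using norm_sub_le_norm_sub_add_norm_sub c p s
      _ = ‖c - d‖ / 2 + ‖c - d‖ / 2 := by
          rw [hcm, norm_sub_rev p s, ← hs2, hcm]
      _ = ‖c - d‖ := by ring
  · intro hle m hm
    set r := ‖c - m‖ with hr
    have hconn : IsConnected (Metric.sphere m r) :=
      isConnected_sphere (lt_of_lt_of_le (by norm_num) hdim) m (norm_nonneg _)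
    have hc : c ∈ Metric.sphere m r := by
      simp [Metric.mem_sphere, dist_eq_norm, hr]
    have hd : d ∈ Metric.sphere m r := by
      simp [Metric.mem_sphere, dist_eq_norm, ← hm]
    have hcont : ContinuousOn (fun x => ‖c - x‖) (Metric.sphere m r) :=
      (continuous_const.sub continuous_id).norm.continuousOn
    have hmem : ‖a - b‖ ∈ Set.Icc (‖c - c‖) (‖c - d‖) := by
      simp [norm_nonneg, hle]
    have := hconn.isPreconnected.intermediate_value hc hd hcont hmem
    obtain ⟨s, hs, hfs⟩ := this
    exact ⟨s, hfs.symm, by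
      have := Metric.mem_sphere.mp hs
      rw [dist_eq_norm] at this
      rw [this]⟩
end

section
/- In a real normed vector space, the relation ab ≡₂ cd defined by 'there exists e with ‖a - e‖ = ‖c - d‖, ‖b - e‖ = ‖c - d‖, and for all x, y with ‖x - a‖ = ‖x - b‖ and ‖y - a‖ = ‖y - x‖ there exists z with ‖z - c‖ = ‖x - y‖ and ‖z - d‖ = ‖x - y‖' holds whenever ‖a - b‖ = 2·‖c - d‖, provided the space has dimension ≥ 2. -/
lemma key_equidistant (V : Type*) [NormedAddCommGroup V] [NormedSpace ℝ V]
    (hdim : 1 < Module.rank ℝ V) (c d : V) (r : ℝ) (hr : ‖c - d‖ ≤ 2 * r) :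
    ∃ z : V, ‖z - c‖ = r ∧ ‖z - d‖ = r := by
  have hr0 : 0 ≤ r := by nlinarith [norm_nonneg (c - d)]
  have : Nontrivial V := by
    rw [← rank_pos_iff_nontrivial (R := ℝ)]
    exact lt_trans zero_lt_one hdim
  by_cases hcd : c = d
  · obtain ⟨u, hu⟩ := exists_norm_eq V hr0
    refine ⟨c + u, by simpa using hu, ?_⟩
    rw [← hcd]; simpa using hu
  · set s := ‖c - d‖ with hs
    have hs0 : 0 < s := by simpa [hs, sub_eq_zero] using hcd
    have hconn := (isConnected_sphere hdim c hr0).isPreconnected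
    set z1 := c + (r / s) • (c - d) with hz1
    set z2 := c + (r / s) • (d - c) with hz2
    have hrs : 0 ≤ r / s := div_nonneg hr0 hs0.le
    have hz1mem : z1 ∈ Metric.sphere c r := by
      simp only [Metric.mem_sphere, hz1, dist_eq_norm, add_sub_cancel_left, norm_smul,
        Real.norm_eq_abs, abs_of_nonneg hrs, ← hs]
      field_simp
    have hz2mem : z2 ∈ Metric.sphere c r := by
      have hdc : ‖d - c‖ = s := by rw [norm_sub_rev, hs]
      simp only [Metric.mem_sphere, hz2, dist_eq_norm, add_sub_cancel_left, norm_smul,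
        Real.norm_eq_abs, abs_of_nonneg hrs, hdc]
      field_simp
    have hcont : ContinuousOn (fun z : V => ‖z - d‖) (Metric.sphere c r) :=
      (continuous_norm.comp (continuous_id.sub continuous_const)).continuousOn
    have hg1 : ‖z1 - d‖ = s + r := by
      have he : z1 - d = (1 + r / s) • (c - d) := by
        simp only [hz1]; module
      rw [he, norm_smul, Real.norm_eq_abs, ← hs, abs_of_nonneg (by linarith)]
      field_simp
    have hg2 : ‖z2 - d‖ = |s - r| := by
      have he : z2 - d = (1 - r / s) • (c - d) := by
        simp only [hz2]; module
      rw [he, norm_smul, Real.norm_eq_abs, ← hs]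
      have habs : |1 - r / s| * s = |(1 - r / s) * s| := by
        rw [abs_mul, abs_of_nonneg hs0.le]
      rw [habs]
      congr 1
      field_simp
    have hmem : r ∈ Set.Icc (‖z2 - d‖) (‖z1 - d‖) := by
      constructor
      · rw [hg2]; exact abs_le.mpr ⟨by linarith, by linarith⟩
      · rw [hg1]; linarith
    obtain ⟨z, hzS, hzd⟩ := hconn.intermediate_value hz2mem hz1mem hcont hmem
    exact ⟨z, by simpa [dist_eq_norm] using hzS, hzd⟩

theorem stmt_12 (V : Type*) [NormedAddCommGroup V] [NormedSpace ℝ V]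
    (hdim : 2 ≤ Module.rank ℝ V) (a b c d : V)
    (h : ‖a - b‖ = 2 * ‖c - d‖) :
    ∃ e : V, ‖a - e‖ = ‖c - d‖ ∧ ‖b - e‖ = ‖c - d‖ ∧
      ∀ x y : V, ‖x - a‖ = ‖x - b‖ → ‖y - a‖ = ‖y - x‖ →
        ∃ z : V, ‖z - c‖ = ‖x - y‖ ∧ ‖z - d‖ = ‖x - y‖ := by
  have hdim' : 1 < Module.rank ℝ V := lt_of_lt_of_le (by norm_num) hdim
  refine ⟨midpoint ℝ a b, ?_, ?_, ?_⟩
  · rw [← dist_eq_norm, dist_left_midpoint (𝕜 := ℝ), dist_eq_norm, h]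
    rw [Real.norm_two]; ring
  · rw [← dist_eq_norm, dist_comm, dist_midpoint_right (𝕜 := ℝ), dist_eq_norm, h]
    rw [Real.norm_two]; ring
  · intro x y hx hy
    have h1 : ‖c - d‖ ≤ ‖x - a‖ := by
      have := norm_sub_le_norm_sub_add_norm_sub a x b
      rw [norm_sub_rev a x] at this
      nlinarith [norm_nonneg (c - d)]
    have h2 : ‖x - a‖ ≤ 2 * ‖x - y‖ := by
      have t : ‖x - a‖ ≤ ‖x - y‖ + ‖y - a‖ := norm_sub_le_norm_sub_add_norm_sub x y a
      have e2 : ‖y - x‖ = ‖x - y‖ := norm_sub_rev y x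
      linarith [hy, e2]
    exact key_equidistant V hdim' c d ‖x - y‖ (by linarith)
end
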